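/- For a positive long root α, the minimal coset representative x_α (the unique element of X_Ĩ with x_α(α̃) = α) has length l(x_α) = ht^∨(α̃) − ht^∨(α), and x_{−α} has length l(x_{−α}) = ht^∨(α̃) + ht^∨(α) − 1. -/

import Mathlib

open scoped RealInnerProductSpace

variable {V : Type*} [NormedAddCommGroup V] [InnerProductSpace ℝ V]

/-- An irreducible reduced (crystallographic) root system in a real inner product space. -/
structure IsIrredRootSystem (Φ : Set V) : Prop where
  finite : Φ.Finite
  nonempty : Φ.Nonempty
  nonzero : (0 : V) ∉ Φ
  spanning : Submodule.span ℝ Φ = ⊤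
  reflect_mem : ∀ α ∈ Φ, ∀ β ∈ Φ, β - (2 * ⟪α, β⟫ / ⟪α, α⟫) • α ∈ Φ
  crystallographic : ∀ α ∈ Φ, ∀ β ∈ Φ, ∃ n : ℤ, 2 * ⟪α, β⟫ / ⟪α, α⟫ = (n : ℝ)
  reduced : ∀ α ∈ Φ, ∀ t : ℝ, t • α ∈ Φ → t = 1 ∨ t = -1
  irreducible : ∀ Φ₁ Φ₂ : Set V, Φ₁ ∪ Φ₂ = Φ →
    (∀ α ∈ Φ₁, ∀ β ∈ Φ₂, ⟪α, β⟫ = 0) → Φ₁ = ∅ ∨ Φ₂ = ∅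

/-- `Δ` is a base (system of simple roots) for `Φ`: it is contained in `Φ`, linearly
independent, and every root is an integral combination of `Δ` with coefficients all of
the same sign. -/
def IsBase (Φ : Set V) (Δ : Finset V) : Prop :=
  (Δ : Set V) ⊆ Φ ∧ LinearIndependent ℝ (fun a : Δ => (a : V)) ∧
    ∀ γ ∈ Φ, ∃ c : V → ℤ, γ = ∑ α ∈ Δ, (c α : ℝ) • α ∧
      ((∀ α ∈ Δ, 0 ≤ c α) ∨ (∀ α ∈ Δ, c α ≤ 0))

/-- The positive roots with respect to the base `Δ`. -/
def posRoots (Φ : Set V) (Δ : Finset V) : Set V :=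
  {γ ∈ Φ | ∃ c : V → ℕ, γ = ∑ α ∈ Δ, (c α : ℝ) • α}

/-- The coroot `γ^∨ = 2γ/(γ|γ)` of a root `γ`. -/
noncomputable def coroot (γ : V) : V := (2 / ⟪γ, γ⟫) • γ

/-- The set of reflections in the roots of `Φ`, as linear automorphisms of `V`. -/
def reflections (Φ : Set V) : Set (V ≃ₗ[ℝ] V) :=
  {w | ∃ α ∈ Φ, ∀ v, w v = v - (2 * ⟪α, v⟫ / ⟪α, α⟫) • α}

/-- The Weyl group of `Φ`: the group generated by the reflections in the roots. -/
def weylGroup (Φ : Set V) : Subgroup (V ≃ₗ[ℝ] V) := Subgroup.closure (reflections Φ)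

/-- The simple reflections with respect to the base `Δ`. -/
def simpleReflections (Δ : Finset V) : Set (V ≃ₗ[ℝ] V) :=
  {w | ∃ α ∈ Δ, ∀ v, w v = v - (2 * ⟪α, v⟫ / ⟪α, α⟫) • α}

/-- The length of `w` with respect to the simple reflections determined by `Δ`. -/
noncomputable def len (Δ : Finset V) (w : V ≃ₗ[ℝ] V) : ℕ :=
  sInf {n | ∃ L : List (V ≃ₗ[ℝ] V),
    (∀ s ∈ L, s ∈ simpleReflections Δ) ∧ L.length = n ∧ L.prod = w}

/-- `t` is the highest root of `Φ` with respect to the base `Δ`. -/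
def IsHighestRoot (Φ : Set V) (Δ : Finset V) (t : V) : Prop :=
  t ∈ Φ ∧ ∀ α ∈ Φ, ∃ c : V → ℕ, t - α = ∑ a ∈ Δ, (c a : ℝ) • a

/-- The set `X_Ĩ` of minimal coset representatives of `W/W_Ĩ`, where `Ĩ` is the set of
simple roots orthogonal to the highest root `t`. -/
def minCosetReps (Φ : Set V) (Δ : Finset V) (t : V) : Set (V ≃ₗ[ℝ] V) :=
  {w | w ∈ weylGroup Φ ∧ ∀ γ ∈ Φ,
    (∃ c : V → ℕ, (∀ a ∈ Δ, ⟪t, a⟫ ≠ 0 → c a = 0) ∧ γ = ∑ a ∈ Δ, (c a : ℝ) • a) →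
      w γ ∈ posRoots Φ Δ}


namespace Stmt11

variable {V : Type*} [NormedAddCommGroup V] [InnerProductSpace ℝ V]

lemma inner_self_pos' {a : V} (h : a ≠ 0) : (0:ℝ) < ⟪a, a⟫ :=
  lt_of_le_of_ne real_inner_self_nonneg (fun h' => h (inner_self_eq_zero.mp h'.symm))

private lemma sr_invol (a : V) (v : V) :
    (v - (2 * ⟪a, v⟫ / ⟪a, a⟫) • a) - (2 * ⟪a, v - (2 * ⟪a, v⟫ / ⟪a, a⟫) • a⟫ / ⟪a, a⟫) • a = v := by
  by_cases h : (a : V) = 0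
  · simp [h]
  · have ha : ⟪a, a⟫ ≠ 0 := (inner_self_pos' h).ne'
    rw [inner_sub_right, real_inner_smul_right]
    have : 2 * (⟪a, v⟫ - 2 * ⟪a, v⟫ / ⟪a, a⟫ * ⟪a, a⟫) / ⟪a, a⟫ = -(2 * ⟪a, v⟫ / ⟪a, a⟫) := by
      field_simp; ring
    rw [this, neg_smul]; abel

/-- The reflection in the vector `a`, as a linear auto. -/
noncomputable def sr (a : V) : V ≃ₗ[ℝ] V :=
  LinearEquiv.ofInvolutive
    { toFun := fun v => v - (2 * ⟪a, v⟫ / ⟪a, a⟫) • a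
      map_add' := by
        intro u v
        simp only [inner_add_right]
        rw [show (2 * (⟪a, u⟫ + ⟪a, v⟫) / ⟪a, a⟫) = 2 * ⟪a, u⟫ / ⟪a, a⟫ + 2 * ⟪a, v⟫ / ⟪a, a⟫ by ring]
        rw [add_smul]; abel
      map_smul' := by
        intro m v
        simp only [real_inner_smul_right, RingHom.id_apply, smul_sub, smul_smul]
        rw [show (2 * (m * ⟪a, v⟫) / ⟪a, a⟫) = m * (2 * ⟪a, v⟫ / ⟪a, a⟫) by ring] }
    (fun v => sr_invol a v)

@[simp] lemma sr_apply (a v : V) : sr a v = v - (2 * ⟪a, v⟫ / ⟪a, a⟫) • a := rfl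

@[simp] lemma sr_sr (a v : V) : sr a (sr a v) = v := sr_invol a v

lemma sr_mul_self (a : V) : sr a * sr a = 1 := by
  ext v; exact sr_sr a v

lemma sr_inv (a : V) : (sr a)⁻¹ = sr a :=
  eq_comm.mp (eq_inv_of_mul_eq_one_left (sr_mul_self a))

@[simp] lemma sr_apply_self (a : V) : sr a a = -a := by
  by_cases h : (a : V) = 0
  · simp [h]
  · have ha : ⟪a, a⟫ ≠ 0 := (inner_self_pos' h).ne'
    rw [sr_apply, mul_div_assoc, div_self ha, mul_one, two_smul]; abel

lemma sr_neg (a : V) : sr (-a) = sr a := by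
  refine LinearEquiv.ext (fun v => ?_)
  have h2 : (2 * ⟪-a, v⟫ / ⟪-a, -a⟫) • (-a : V) = (2 * ⟪a, v⟫ / ⟪a, a⟫) • a := by
    rw [inner_neg_left, inner_neg_neg]
    rw [show 2 * -⟪a,v⟫ / ⟪a,a⟫ = -(2 * ⟪a,v⟫ / ⟪a,a⟫) by ring, neg_smul, smul_neg, neg_neg]
  rw [sr_apply, sr_apply, h2]

lemma sr_inner (a u v : V) : ⟪sr a u, sr a v⟫ = ⟪u, v⟫ := by
  by_cases h : (a : V) = 0
  · simp [h]
  · have ha : ⟪a, a⟫ ≠ 0 := (inner_self_pos' h).ne'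
    simp only [sr_apply, inner_sub_left, inner_sub_right, real_inner_smul_left,
      real_inner_smul_right]
    rw [real_inner_comm a u]
    field_simp
    ring

end Stmt11

namespace Stmt11

variable {V : Type*} [NormedAddCommGroup V] [InnerProductSpace ℝ V]
variable {Φ : Set V} {Δ : Finset V} {t : V}

lemma mem_reflections_iff {w : V ≃ₗ[ℝ] V} :
    w ∈ reflections Φ ↔ ∃ a ∈ Φ, w = sr a := by
  constructor
  · rintro ⟨a, ha, h⟩
    exact ⟨a, ha, LinearEquiv.ext (fun v => by rw [h v, sr_apply])⟩
  · rintro ⟨a, ha, rfl⟩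
    exact ⟨a, ha, fun v => rfl⟩

lemma mem_simpleReflections_iff {w : V ≃ₗ[ℝ] V} :
    w ∈ simpleReflections Δ ↔ ∃ a ∈ Δ, w = sr a := by
  constructor
  · rintro ⟨a, ha, h⟩
    exact ⟨a, ha, LinearEquiv.ext (fun v => by rw [h v, sr_apply])⟩
  · rintro ⟨a, ha, rfl⟩
    exact ⟨a, ha, fun v => rfl⟩

lemma sr_mem_weylGroup {a : V} (ha : a ∈ Φ) : sr a ∈ weylGroup Φ :=
  Subgroup.subset_closure (mem_reflections_iff.mpr ⟨a, ha, rfl⟩)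

lemma simple_mem_weylGroup (hΔΦ : (Δ : Set V) ⊆ Φ) {w : V ≃ₗ[ℝ] V}
    (hw : w ∈ simpleReflections Δ) : w ∈ weylGroup Φ := by
  obtain ⟨a, ha, rfl⟩ := mem_simpleReflections_iff.mp hw
  exact sr_mem_weylGroup (hΔΦ ha)

/-- The subgroup of elements preserving `Φ` (in both directions) and the inner product. -/
private def goodSubgroup (Φ : Set V) : Subgroup (V ≃ₗ[ℝ] V) where
  carrier := {w | (∀ γ ∈ Φ, w γ ∈ Φ) ∧ (∀ γ ∈ Φ, w.symm γ ∈ Φ) ∧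
    ∀ u v : V, ⟪w u, w v⟫ = ⟪u, v⟫}
  one_mem' := ⟨fun γ hγ => hγ, fun γ hγ => hγ, fun u v => rfl⟩
  mul_mem' := by
    rintro x y ⟨hx1, hx2, hx3⟩ ⟨hy1, hy2, hy3⟩
    refine ⟨fun γ hγ => hx1 _ (hy1 _ hγ), fun γ hγ => hy2 _ (hx2 _ hγ), fun u v => ?_⟩
    show ⟪x (y u), x (y v)⟫ = _
    rw [hx3, hy3]
  inv_mem' := by
    rintro x ⟨hx1, hx2, hx3⟩
    refine ⟨fun γ hγ => hx2 _ hγ, fun γ hγ => ?_, fun u v => ?_⟩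
    · show x.symm.symm γ ∈ Φ
      rw [LinearEquiv.symm_symm]; exact hx1 _ hγ
    · show ⟪x.symm u, x.symm v⟫ = _
      conv_rhs => rw [show u = x (x.symm u) by simp, show v = x (x.symm v) by simp]
      rw [hx3]

lemma weylGroup_le_good (hΦ : IsIrredRootSystem Φ) : weylGroup Φ ≤ goodSubgroup Φ := by
  refine (Subgroup.closure_le _).mpr ?_
  rintro w hw
  obtain ⟨a, ha, rfl⟩ := mem_reflections_iff.mp hw
  refine ⟨fun γ hγ => ?_, fun γ hγ => ?_, fun u v => sr_inner a u v⟩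
  · simpa using hΦ.reflect_mem a ha γ hγ
  · have hs : (sr a).symm γ = sr a γ := (sr a).symm_apply_eq.mpr (sr_sr a γ).symm
    rw [hs]
    simpa using hΦ.reflect_mem a ha γ hγ

lemma weyl_maps_root (hΦ : IsIrredRootSystem Φ) {w : V ≃ₗ[ℝ] V} (hw : w ∈ weylGroup Φ)
    {γ : V} (hγ : γ ∈ Φ) : w γ ∈ Φ := (weylGroup_le_good hΦ hw).1 γ hγ

lemma weyl_symm_maps_root (hΦ : IsIrredRootSystem Φ) {w : V ≃ₗ[ℝ] V} (hw : w ∈ weylGroup Φ)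
    {γ : V} (hγ : γ ∈ Φ) : w.symm γ ∈ Φ := (weylGroup_le_good hΦ hw).2.1 γ hγ

lemma weyl_inner (hΦ : IsIrredRootSystem Φ) {w : V ≃ₗ[ℝ] V} (hw : w ∈ weylGroup Φ)
    (u v : V) : ⟪w u, w v⟫ = ⟪u, v⟫ := (weylGroup_le_good hΦ hw).2.2 u v

/-- Conjugation formula: `sr (w b) = w * sr b * w⁻¹` for inner-product preserving `w`. -/
lemma sr_conj (hΦ : IsIrredRootSystem Φ) {w : V ≃ₗ[ℝ] V} (hw : w ∈ weylGroup Φ) (b : V) :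
    sr (w b) = w * sr b * w⁻¹ := by
  refine LinearEquiv.ext (fun v => ?_)
  show _ = w (sr b (w.symm v))
  rw [sr_apply, sr_apply, map_sub, map_smul]
  congr 2
  · exact (w.apply_symm_apply v).symm
  · have h1 : ⟪w b, v⟫ = ⟪b, w.symm v⟫ := by
      conv_lhs => rw [show v = w (w.symm v) from (w.apply_symm_apply v).symm]
      exact weyl_inner hΦ hw b (w.symm v)
    have h2 : ⟪w b, w b⟫ = ⟪b, b⟫ := weyl_inner hΦ hw b b
    rw [h1, h2]
  
end Stmt11

namespace Stmt11
open scoped Classical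

variable {V : Type*} [NormedAddCommGroup V] [InnerProductSpace ℝ V]
variable {Φ : Set V} {Δ : Finset V} {t : V} {r : ℝ} {f : V →ₗ[ℝ] ℝ}

lemma coords_zero (hΔ : IsBase Φ Δ) {g : V → ℝ}
    (h : ∑ a ∈ Δ, g a • a = 0) : ∀ a ∈ Δ, g a = 0 := by
  intro a ha
  have hli := Fintype.linearIndependent_iff.mp hΔ.2.1 (fun i => g i)
  have hs : ∑ i : Δ, g i • (i : V) = 0 := by
    rw [Finset.sum_coe_sort Δ (fun a => g a • a)]; exact h
  exact hli hs ⟨a, ha⟩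

lemma coords_unique (hΔ : IsBase Φ Δ) {g h : V → ℝ}
    (heq : ∑ a ∈ Δ, g a • a = ∑ a ∈ Δ, h a • a) : ∀ a ∈ Δ, g a = h a := by
  intro a ha
  have h0 : ∑ a ∈ Δ, (g a - h a) • a = 0 := by
    simp only [sub_smul, Finset.sum_sub_distrib, heq, sub_self]
  have := coords_zero hΔ h0 a ha
  linarith

lemma root_ne_zero (hΦ : IsIrredRootSystem Φ) {γ : V} (hγ : γ ∈ Φ) : γ ≠ 0 :=
  fun h0 => hΦ.nonzero (h0 ▸ hγ)

lemma root_inner_pos (hΦ : IsIrredRootSystem Φ) {γ : V} (hγ : γ ∈ Φ) : (0:ℝ) < ⟪γ, γ⟫ :=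
  inner_self_pos' (root_ne_zero hΦ hγ)

lemma neg_mem_phi (hΦ : IsIrredRootSystem Φ) {γ : V} (hγ : γ ∈ Φ) : -γ ∈ Φ := by
  have h := hΦ.reflect_mem γ hγ γ hγ
  have hne : ⟪γ, γ⟫ ≠ 0 := (root_inner_pos hΦ hγ).ne'
  rw [mul_div_assoc, div_self hne, mul_one, two_smul] at h
  have : γ - (γ + γ) = -γ := by abel
  rwa [this] at h

lemma posRoots_subset : posRoots Φ Δ ⊆ Φ := fun _ h => h.1

lemma pos_or_neg (hΦ : IsIrredRootSystem Φ) (hΔ : IsBase Φ Δ) {γ : V} (hγ : γ ∈ Φ) :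
    γ ∈ posRoots Φ Δ ∨ -γ ∈ posRoots Φ Δ := by
  obtain ⟨c, hsum, hsign⟩ := hΔ.2.2 γ hγ
  rcases hsign with hs | hs
  · left
    refine ⟨hγ, fun v => (c v).toNat, ?_⟩
    rw [hsum]
    refine Finset.sum_congr rfl (fun a ha => ?_)
    congr 1
    rw [← Int.cast_natCast, Int.toNat_of_nonneg (hs a ha)]
  · right
    refine ⟨neg_mem_phi hΦ hγ, fun v => (-c v).toNat, ?_⟩
    rw [hsum, ← Finset.sum_neg_distrib]
    refine Finset.sum_congr rfl (fun a ha => ?_)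
    rw [← neg_smul]
    congr 1
    rw [← Int.cast_natCast, Int.toNat_of_nonneg (by have := hs a ha; omega : (0:ℤ) ≤ -c a)]
    push_cast
    ring

lemma not_pos_and_neg (hΦ : IsIrredRootSystem Φ) (hΔ : IsBase Φ Δ) {γ : V}
    (h1 : γ ∈ posRoots Φ Δ) (h2 : -γ ∈ posRoots Φ Δ) : False := by
  obtain ⟨hγ, c, hc⟩ := h1
  obtain ⟨_, d, hd⟩ := h2
  have h0 : ∑ a ∈ Δ, (((c a : ℝ)) + (d a : ℝ)) • a = 0 := by
    simp only [add_smul, Finset.sum_add_distrib, ← hc, ← hd]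
    abel
  have hz := coords_zero hΔ h0
  have : γ = 0 := by
    rw [hc]
    refine Finset.sum_eq_zero (fun a ha => ?_)
    have h3 := hz a ha
    have h4 : (0:ℝ) ≤ (c a : ℝ) := Nat.cast_nonneg _
    have h5 : (0:ℝ) ≤ (d a : ℝ) := Nat.cast_nonneg _
    have hca : (c a : ℝ) = 0 := by linarith
    rw [hca, zero_smul]
  exact hΦ.nonzero (this ▸ hγ)

lemma simple_mem_pos (hΔ : IsBase Φ Δ) {a : V} (ha : a ∈ Δ) : a ∈ posRoots Φ Δ := by
  refine ⟨hΔ.1 ha, fun v => if v = a then 1 else 0, ?_⟩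
  have h1 : ∑ b ∈ Δ, ((if b = a then (1:ℕ) else 0 : ℕ) : ℝ) • b
      = ∑ b ∈ Δ, (if b = a then b else 0) := by
    refine Finset.sum_congr rfl (fun b _ => ?_)
    by_cases hb : b = a <;> simp [hb]
  rw [h1, Finset.sum_ite_eq' Δ a (fun b => b), if_pos ha]

lemma f_simple (hΦ : IsIrredRootSystem Φ) (hΔ : IsBase Φ Δ)
    (hf : ∀ a ∈ Δ, f (coroot a) = 1) {a : V} (ha : a ∈ Δ) : f a = ⟪a, a⟫ / 2 := by
  have h1 := hf a ha
  have h2 : ⟪a, a⟫ ≠ 0 := (root_inner_pos hΦ (hΔ.1 ha)).ne'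
  unfold coroot at h1
  rw [map_smul, smul_eq_mul] at h1
  field_simp at h1 ⊢
  linarith

lemma f_pos_of_pos (hΦ : IsIrredRootSystem Φ) (hΔ : IsBase Φ Δ)
    (hf : ∀ a ∈ Δ, f (coroot a) = 1) {γ : V} (hγ : γ ∈ posRoots Φ Δ) : 0 < f γ := by
  obtain ⟨hγΦ, c, hc⟩ := hγ
  have hfγ : f γ = ∑ a ∈ Δ, (c a : ℝ) * f a := by
    rw [hc, map_sum]
    exact Finset.sum_congr rfl (fun a _ => by rw [map_smul, smul_eq_mul])
  rw [hfγ]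
  have hterm : ∀ a ∈ Δ, (0:ℝ) ≤ (c a : ℝ) * f a := by
    intro a ha
    have := root_inner_pos hΦ (hΔ.1 ha)
    have hfa : 0 < f a := by rw [f_simple hΦ hΔ hf ha]; linarith
    positivity
  have hex : ∃ a ∈ Δ, (0:ℝ) < (c a : ℝ) * f a := by
    by_contra hcon
    push_neg at hcon
    have : ∀ a ∈ Δ, c a = 0 := by
      intro a ha
      have h2 := hcon a ha
      have := root_inner_pos hΦ (hΔ.1 ha)
      have hfa : 0 < f a := by rw [f_simple hΦ hΔ hf ha]; linarith
      by_contra hc0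
      have : (0:ℝ) < (c a : ℝ) * f a := by
        have : (0:ℝ) < (c a : ℝ) := by exact_mod_cast Nat.pos_of_ne_zero hc0
        positivity
      linarith
    have hγ0 : γ = 0 := by
      rw [hc]
      exact Finset.sum_eq_zero (fun a ha => by rw [this a ha]; simp)
    exact hΦ.nonzero (hγ0 ▸ hγΦ)
  obtain ⟨a, ha, hpos⟩ := hex
  calc (0:ℝ) < (c a:ℝ) * f a := hpos
    _ ≤ ∑ a ∈ Δ, (c a : ℝ) * f a := Finset.single_le_sum hterm ha

end Stmt11

namespace Stmt11
open scoped Classical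

variable {V : Type*} [NormedAddCommGroup V] [InnerProductSpace ℝ V]
variable {Φ : Set V} {Δ : Finset V} {t : V} {r : ℝ} {f : V →ₗ[ℝ] ℝ}

lemma parallel_of_CS_eq (hΦ : IsIrredRootSystem Φ) {a β : V} (ha : a ∈ Φ) (hβ : β ∈ Φ)
    (h : ⟪a, β⟫ * ⟪a, β⟫ = ⟪a, a⟫ * ⟪β, β⟫) : β = a ∨ β = -a := by
  have haa := root_inner_pos hΦ ha
  have hq : ⟪a, a⟫ ≠ 0 := haa.ne'
  have hu : ⟪(⟪a, a⟫:ℝ) • β - ⟪a, β⟫ • a, (⟪a, a⟫:ℝ) • β - ⟪a, β⟫ • a⟫ = 0 := by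
    simp only [inner_sub_left, inner_sub_right, real_inner_smul_left, real_inner_smul_right]
    rw [real_inner_comm a β]
    linear_combination (-(⟪a, a⟫ : ℝ)) * h
  have hu0 : (⟪a, a⟫:ℝ) • β - ⟪a, β⟫ • a = 0 := inner_self_eq_zero.mp hu
  have hc : (⟪a, a⟫:ℝ) • β = ⟪a, β⟫ • a := by rwa [sub_eq_zero] at hu0
  have hβc : β = (⟪a, β⟫ / ⟪a, a⟫) • a := by
    calc β = ((⟪a, a⟫:ℝ)⁻¹ * ⟪a, a⟫) • β := by rw [inv_mul_cancel₀ hq, one_smul]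
    _ = (⟪a, a⟫:ℝ)⁻¹ • ((⟪a, a⟫:ℝ) • β) := by rw [mul_smul]
    _ = (⟪a, a⟫:ℝ)⁻¹ • ((⟪a, β⟫:ℝ) • a) := by rw [hc]
    _ = (⟪a, β⟫ / ⟪a, a⟫) • a := by rw [smul_smul, div_eq_inv_mul]
  rcases hΦ.reduced a ha _ (hβc ▸ hβ) with h1 | h1
  · left; rw [hβc, h1, one_smul]
  · right; rw [hβc, h1, neg_smul, one_smul]

lemma cartan_int (hΦ : IsIrredRootSystem Φ) {β a : V} (hβ : β ∈ Φ) (ha : a ∈ Φ) :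
    ∃ n : ℤ, 2 * ⟪a, β⟫ / ⟪β, β⟫ = (n : ℝ) := by
  obtain ⟨n, hn⟩ := hΦ.crystallographic β hβ a ha
  refine ⟨n, ?_⟩
  rw [real_inner_comm β a]
  exact hn

lemma r_pos (hΦ : IsIrredRootSystem Φ) (hr : IsGreatest {x : ℝ | ∃ α ∈ Φ, x = ⟪α, α⟫} r) :
    0 < r := by
  obtain ⟨α0, hα0, hval⟩ := hr.1
  rw [hval]; exact root_inner_pos hΦ hα0

lemma cartan_eq_neg_one (hΦ : IsIrredRootSystem Φ)
    (hr : IsGreatest {x : ℝ | ∃ α ∈ Φ, x = ⟪α, α⟫} r) {β a : V}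
    (hβ : β ∈ Φ) (ha : a ∈ Φ) (hβr : ⟪β, β⟫ = r) (h1 : β ≠ a) (h2 : β ≠ -a)
    (hneg : ⟪a, β⟫ < 0) : 2 * ⟪a, β⟫ / ⟪β, β⟫ = -1 := by
  obtain ⟨n, hn⟩ := cartan_int hΦ hβ ha
  have hrpos := r_pos hΦ hr
  have haa : ⟪a, a⟫ ≤ r := hr.2 ⟨a, ha, rfl⟩
  have hCSne : ⟪a, β⟫ * ⟪a, β⟫ ≠ ⟪a, a⟫ * ⟪β, β⟫ := by
    intro heq
    rcases parallel_of_CS_eq hΦ ha hβ heq with h | h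
    exacts [h1 h, h2 h]
  have hCS : ⟪a, β⟫ * ⟪a, β⟫ < ⟪a, a⟫ * ⟪β, β⟫ :=
    lt_of_le_of_ne (real_inner_mul_inner_self_le a β) hCSne
  have hab : 2 * ⟪a, β⟫ = (n : ℝ) * r := by
    have : ⟪β, β⟫ ≠ 0 := by rw [hβr]; exact hrpos.ne'
    field_simp at hn
    rw [hβr] at hn; linarith [hn]
  have hn2 : ((n : ℝ))^2 < 4 := by
    have h4 : (2 * ⟪a, β⟫)^2 < 4 * r * r := by
      rw [hβr] at hCS
      nlinarith [hCS, haa, hrpos]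
    rw [hab] at h4
    nlinarith [hrpos]
  have hnneg : (n : ℝ) < 0 := by
    rw [← hn, hβr]
    exact div_neg_of_neg_of_pos (by linarith) hrpos
  have hint : n = -1 := by
    have h5 : n^2 < 4 := by exact_mod_cast hn2
    have h6 : n < 0 := by exact_mod_cast hnneg
    nlinarith [h5, h6]
  rw [hn, hint]; norm_num

lemma t_dominant (hΦ : IsIrredRootSystem Φ) (hΔ : IsBase Φ Δ) (ht : IsHighestRoot Φ Δ t)
    {a : V} (ha : a ∈ Δ) : 0 ≤ ⟪t, a⟫ := by
  have haΦ := hΔ.1 ha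
  have hsr := hΦ.reflect_mem a haΦ t ht.1
  obtain ⟨c, hc⟩ := ht.2 _ hsr
  have hsub : t - (t - (2 * ⟪a, t⟫ / ⟪a, a⟫) • a) = (2 * ⟪a, t⟫ / ⟪a, a⟫) • a := by abel
  rw [hsub] at hc
  have hrw : (2 * ⟪a, t⟫ / ⟪a, a⟫) • a
      = ∑ b ∈ Δ, (if b = a then (2 * ⟪a, t⟫ / ⟪a, a⟫) else 0) • b := by
    have : ∑ b ∈ Δ, (if b = a then (2 * ⟪a, t⟫ / ⟪a, a⟫) else 0) • b
        = ∑ b ∈ Δ, (if b = a then (2 * ⟪a, t⟫ / ⟪a, a⟫) • b else 0) := by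
      refine Finset.sum_congr rfl (fun b _ => ?_)
      by_cases hb : b = a <;> simp [hb]
    rw [this, Finset.sum_ite_eq' Δ a, if_pos ha]
  rw [hrw] at hc
  have heq := coords_unique hΔ hc a ha
  rw [if_pos rfl] at heq
  have haa := root_inner_pos hΦ haΦ
  have h7 : 0 ≤ 2 * ⟪a, t⟫ / ⟪a, a⟫ := by rw [heq]; exact Nat.cast_nonneg _
  rw [real_inner_comm a t]
  by_contra hcon
  push_neg at hcon
  have : 2 * ⟪a, t⟫ / ⟪a, a⟫ < 0 := div_neg_of_neg_of_pos (by linarith) haa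
  linarith

lemma t_pos (hΦ : IsIrredRootSystem Φ) (hΔ : IsBase Φ Δ) (ht : IsHighestRoot Φ Δ t) :
    t ∈ posRoots Φ Δ := by
  rcases pos_or_neg hΦ hΔ ht.1 with h | h
  · exact h
  · exfalso
    obtain ⟨hnegΦ, d, hd⟩ := h
    obtain ⟨c, hc⟩ := ht.2 _ hnegΦ
    have h2t : t - -t = t + t := by abel
    rw [h2t] at hc
    have h0 : ∑ a ∈ Δ, (((c a : ℝ)) + 2 * (d a : ℝ)) • a = 0 := by
      have e1 : ∑ a ∈ Δ, (((c a : ℝ)) + 2 * (d a : ℝ)) • a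
          = (∑ a ∈ Δ, (c a : ℝ) • a) + (2:ℝ) • (∑ a ∈ Δ, (d a : ℝ) • a) := by
        rw [Finset.smul_sum, ← Finset.sum_add_distrib]
        refine Finset.sum_congr rfl (fun a _ => ?_)
        rw [add_smul, mul_smul]
      rw [e1, ← hc, ← hd, smul_neg, two_smul]
      abel
    have hz := coords_zero hΔ h0
    have ht0 : t + t = 0 := by
      rw [hc]
      refine Finset.sum_eq_zero (fun a ha => ?_)
      have h3 := hz a ha
      have h4 : (0:ℝ) ≤ (c a : ℝ) := Nat.cast_nonneg _
      have h5 : (0:ℝ) ≤ (d a : ℝ) := Nat.cast_nonneg _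
      have : (c a : ℝ) = 0 := by linarith
      rw [this, zero_smul]
    have htz : t = 0 := by
      have h2 : (2:ℝ) • t = 0 := by rw [two_smul]; exact ht0
      rcases smul_eq_zero.mp h2 with h | h
      · norm_num at h
      · exact h
    exact hΦ.nonzero (htz ▸ ht.1)

lemma pos_inner_t (hΦ : IsIrredRootSystem Φ) (hΔ : IsBase Φ Δ) (ht : IsHighestRoot Φ Δ t)
    {γ : V} (hγ : γ ∈ posRoots Φ Δ) : 0 ≤ ⟪t, γ⟫ := by
  obtain ⟨hγΦ, c, hc⟩ := hγ
  rw [hc, inner_sum]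
  refine Finset.sum_nonneg (fun a ha => ?_)
  rw [real_inner_smul_right]
  exact mul_nonneg (Nat.cast_nonneg _) (t_dominant hΦ hΔ ht ha)

lemma orth_support (hΦ : IsIrredRootSystem Φ) (hΔ : IsBase Φ Δ) (ht : IsHighestRoot Φ Δ t)
    {γ : V} (hγ : γ ∈ posRoots Φ Δ) (h0 : ⟪t, γ⟫ = 0) :
    ∃ c : V → ℕ, (∀ a ∈ Δ, ⟪t, a⟫ ≠ 0 → c a = 0) ∧ γ = ∑ a ∈ Δ, (c a : ℝ) • a := by
  obtain ⟨hγΦ, c, hc⟩ := hγ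
  refine ⟨c, fun a ha hta => ?_, hc⟩
  have hsum : ∑ a ∈ Δ, (c a : ℝ) * ⟪t, a⟫ = 0 := by
    rw [← h0, hc, inner_sum]
    exact Finset.sum_congr rfl (fun b _ => by rw [real_inner_smul_right])
  have hterm : ∀ b ∈ Δ, 0 ≤ (c b : ℝ) * ⟪t, b⟫ :=
    fun b hb => mul_nonneg (Nat.cast_nonneg _) (t_dominant hΦ hΔ ht hb)
  have := (Finset.sum_eq_zero_iff_of_nonneg hterm).mp hsum a ha
  have hta' : 0 < ⟪t, a⟫ := lt_of_le_of_ne (t_dominant hΦ hΔ ht ha) (Ne.symm hta)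
  have : (c a : ℝ) = 0 := by
    rcases mul_eq_zero.mp this with h | h
    · exact h
    · exact absurd h hta
  exact_mod_cast this

lemma S_orth (hΦ : IsIrredRootSystem Φ) {γ : V}
    (hS : ∃ c : V → ℕ, (∀ a ∈ Δ, ⟪t, a⟫ ≠ 0 → c a = 0) ∧ γ = ∑ a ∈ Δ, (c a : ℝ) • a) :
    ⟪t, γ⟫ = 0 := by
  obtain ⟨c, hsupp, hc⟩ := hS
  rw [hc, inner_sum]
  refine Finset.sum_eq_zero (fun a ha => ?_)
  rw [real_inner_smul_right]
  by_cases h : ⟪t, a⟫ = 0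
  · rw [h, mul_zero]
  · rw [hsupp a ha h]; simp

lemma exists_simple_inner_pos (hΦ : IsIrredRootSystem Φ) (hΔ : IsBase Φ Δ)
    {γ : V} (hγ : γ ∈ posRoots Φ Δ) : ∃ a ∈ Δ, 0 < ⟪a, γ⟫ := by
  obtain ⟨hγΦ, c, hc⟩ := hγ
  by_contra hcon
  push_neg at hcon
  have e : ⟪γ, γ⟫ = ⟪∑ a ∈ Δ, (c a:ℝ) • a, γ⟫ := by nth_rewrite 1 [hc]; rfl
  have h1 : ⟪γ, γ⟫ ≤ 0 := by
    rw [e, sum_inner]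
    refine Finset.sum_nonpos (fun a ha => ?_)
    rw [real_inner_smul_left]
    exact mul_nonpos_of_nonneg_of_nonpos (Nat.cast_nonneg _) (hcon a ha)
  linarith [root_inner_pos hΦ hγΦ]

lemma exists_descent (hΦ : IsIrredRootSystem Φ) (hΔ : IsBase Φ Δ)
    (hr : IsGreatest {x : ℝ | ∃ α ∈ Φ, x = ⟪α, α⟫} r) (ht : IsHighestRoot Φ Δ t)
    {β : V} (hβ : β ∈ Φ) (hβr : ⟪β, β⟫ = r) (hne : β ≠ t) : ∃ a ∈ Δ, ⟪a, β⟫ < 0 := by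
  rcases pos_or_neg hΦ hΔ hβ with hp | hn
  · by_contra hcon
    push_neg at hcon
    obtain ⟨c, hc⟩ := ht.2 β hβ
    have h1 : 0 ≤ ⟪t - β, β⟫ := by
      rw [hc, sum_inner]
      refine Finset.sum_nonneg (fun a ha => ?_)
      rw [real_inner_smul_left]
      exact mul_nonneg (Nat.cast_nonneg _) (hcon a ha)
    have h2 : 0 ≤ ⟪t - β, t⟫ := by
      rw [hc, sum_inner]
      refine Finset.sum_nonneg (fun a ha => ?_)
      rw [real_inner_smul_left, real_inner_comm]
      exact mul_nonneg (Nat.cast_nonneg _) (t_dominant hΦ hΔ ht ha)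
    have h3 : ⟪t, t⟫ ≤ r := hr.2 ⟨t, ht.1, rfl⟩
    have h4 : ⟪t - β, t⟫ + ⟪t - β, β⟫ = ⟪t, t⟫ - ⟪β, β⟫ := by
      rw [inner_sub_left, inner_sub_left, real_inner_comm β t]
      ring
    have h5 : ⟪t - β, t - β⟫ = ⟪t - β, t⟫ - ⟪t - β, β⟫ := by
      rw [inner_sub_right]
    have h6 : ⟪t - β, t⟫ = 0 ∧ ⟪t - β, β⟫ = 0 := by
      constructor <;> nlinarith [h1, h2, h3, h4, hβr]
    have h7 : ⟪t - β, t - β⟫ = 0 := by rw [h5, h6.1, h6.2]; ring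
    have := inner_self_eq_zero.mp h7
    exact hne ((by rwa [sub_eq_zero] at this : t = β)).symm
  · obtain ⟨a, ha, hpos⟩ := exists_simple_inner_pos hΦ hΔ hn
    refine ⟨a, ha, ?_⟩
    rw [inner_neg_right] at hpos
    linarith

end Stmt11

namespace Stmt11
open scoped Classical

variable {V : Type*} [NormedAddCommGroup V] [InnerProductSpace ℝ V]
variable {Φ : Set V} {Δ : Finset V} {t : V} {r : ℝ} {f : V →ₗ[ℝ] ℝ}

lemma pos_of_int_coords (hΦ : IsIrredRootSystem Φ) (hΔ : IsBase Φ Δ) {γ : V} (hγΦ : γ ∈ Φ)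
    {d : V → ℤ} (hsum : γ = ∑ b ∈ Δ, (d b : ℝ) • b) (hnn : ∀ b ∈ Δ, 0 ≤ d b) :
    γ ∈ posRoots Φ Δ := by
  refine ⟨hγΦ, fun v => (d v).toNat, ?_⟩
  rw [hsum]
  refine Finset.sum_congr rfl (fun b hb => ?_)
  congr 1
  rw [← Int.cast_natCast, Int.toNat_of_nonneg (hnn b hb)]

/-- scalar multiple helper: writing `k • a` as a sum over `Δ`. -/
lemma smul_eq_sum_ite {a : V} (ha : a ∈ Δ) (k : ℝ) :
    k • a = ∑ b ∈ Δ, (if b = a then k else 0) • b := by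
  have : ∑ b ∈ Δ, (if b = a then k else 0) • b = ∑ b ∈ Δ, (if b = a then k • b else 0) := by
    refine Finset.sum_congr rfl (fun b _ => ?_)
    by_cases hb : b = a <;> simp [hb]
  rw [this, Finset.sum_ite_eq' Δ a, if_pos ha]

/-- A positive root not proportional to a simple root has a coordinate off that simple root. -/
lemma exists_other_coord (hΦ : IsIrredRootSystem Φ) (hΔ : IsBase Φ Δ) {a γ : V} (ha : a ∈ Δ)
    (hγ : γ ∈ posRoots Φ Δ) (hne : γ ≠ a) {c : V → ℕ} (hc : γ = ∑ b ∈ Δ, (c b : ℝ) • b) :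
    ∃ b ∈ Δ, b ≠ a ∧ c b ≠ 0 := by
  by_contra hcon
  push_neg at hcon
  have hγa : γ = ((c a : ℝ)) • a := by
    rw [hc]
    rw [Finset.sum_eq_single a]
    · intro b hb hba
      rw [hcon b hb hba]; simp
    · intro haΔ
      exact absurd ha haΔ
  rcases hΦ.reduced a (hΔ.1 ha) _ (hγa ▸ hγ.1) with h1 | h1
  · exact hne (by rw [hγa, h1, one_smul])
  · have : (0:ℝ) ≤ (c a : ℝ) := Nat.cast_nonneg _
    rw [h1] at this; norm_num at this

/-- Key Lemma: a simple reflection permutes the positive roots other than its own root. -/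
lemma sr_perm_pos (hΦ : IsIrredRootSystem Φ) (hΔ : IsBase Φ Δ) {a γ : V} (ha : a ∈ Δ)
    (hγ : γ ∈ posRoots Φ Δ) (hne : γ ≠ a) : sr a γ ∈ posRoots Φ Δ ∧ sr a γ ≠ a := by
  have haΦ := hΔ.1 ha
  have hγΦ := hγ.1
  have hsrΦ : sr a γ ∈ Φ := by
    rw [sr_apply]
    exact hΦ.reflect_mem a haΦ γ hγΦ
  obtain ⟨hγΦ', c, hc⟩ := hγ
  obtain ⟨b₀, hb₀, hb₀a, hb₀c⟩ := exists_other_coord hΦ hΔ ha ⟨hγΦ', c, hc⟩ hne hc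
  set k : ℝ := 2 * ⟪a, γ⟫ / ⟪a, a⟫ with hk
  have hexp : sr a γ = ∑ b ∈ Δ, (((c b : ℝ)) - (if b = a then k else 0)) • b := by
    rw [sr_apply, ← hk, hc, smul_eq_sum_ite ha k, ← Finset.sum_sub_distrib]
    · refine Finset.sum_congr rfl (fun b _ => ?_)
      rw [sub_smul]
  obtain ⟨d, hd, hsign⟩ := hΔ.2.2 _ hsrΦ
  have hcoords := coords_unique hΔ (hexp.symm.trans hd)
  have hb₀d : (0:ℝ) < (d b₀ : ℝ) := by
    have := hcoords b₀ hb₀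
    rw [if_neg hb₀a, sub_zero] at this
    rw [← this]
    exact_mod_cast Nat.pos_of_ne_zero hb₀c
  have hnn : ∀ b ∈ Δ, 0 ≤ d b := by
    rcases hsign with hs | hs
    · exact hs
    · exfalso
      have := hs b₀ hb₀
      have : (d b₀ : ℝ) ≤ 0 := by exact_mod_cast this
      linarith
  refine ⟨pos_of_int_coords hΦ hΔ hsrΦ hd hnn, ?_⟩
  intro hcon
  have hγneg : γ = -a := by
    have := congrArg (sr a) hcon
    rw [sr_sr, sr_apply_self] at this
    exact this
  have hγpos : γ ∈ posRoots Φ Δ := ⟨hγΦ', c, hc⟩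
  have hnegpos : -γ ∈ posRoots Φ Δ := by
    rw [hγneg, neg_neg]; exact simple_mem_pos hΔ ha
  exact not_pos_and_neg hΦ hΔ hγpos hnegpos

/-- Mirror: a simple reflection maps negative roots other than `-a` to negative roots. -/
lemma sr_perm_neg (hΦ : IsIrredRootSystem Φ) (hΔ : IsBase Φ Δ) {a δ : V} (ha : a ∈ Δ)
    (hδ : -δ ∈ posRoots Φ Δ) (hne : δ ≠ -a) : -(sr a δ) ∈ posRoots Φ Δ := by
  have h1 : -δ ≠ a := fun h => hne (by rw [← neg_neg δ, h])
  have := (sr_perm_pos hΦ hΔ ha hδ h1).1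
  rwa [map_neg] at this

end Stmt11

namespace Stmt11
open scoped Classical

variable {V : Type*} [NormedAddCommGroup V] [InnerProductSpace ℝ V]
variable {Φ : Set V} {Δ : Finset V} {t : V} {r : ℝ} {f : V →ₗ[ℝ] ℝ}

lemma f_sr (hΦ : IsIrredRootSystem Φ) (a β : V) :
    f (sr a β) = f β - (2 * ⟪a, β⟫ / ⟪a, a⟫) * f a := by
  rw [sr_apply, map_sub, map_smul, smul_eq_mul]

/-- Every reflection in a positive root is a product of simple reflections. -/
lemma refl_word_pos (hΦ : IsIrredRootSystem Φ) (hΔ : IsBase Φ Δ)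
    (hf : ∀ a ∈ Δ, f (coroot a) = 1) :
    ∀ n : ℕ, ∀ β : V, β ∈ posRoots Φ Δ → ({δ ∈ Φ | f δ < f β}).ncard = n →
    ∃ L : List (V ≃ₗ[ℝ] V), (∀ s ∈ L, s ∈ simpleReflections Δ) ∧ L.prod = sr β := by
  intro n
  induction n using Nat.strong_induction_on with
  | _ n IH =>
    intro β hβ hn
    obtain ⟨a, ha, hpos⟩ := exists_simple_inner_pos hΦ hΔ hβ
    by_cases hba : β = a
    · refine ⟨[sr a], ?_, ?_⟩
      · intro s hs
        rw [List.mem_singleton] at hs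
        rw [hs]
        exact mem_simpleReflections_iff.mpr ⟨a, ha, rfl⟩
      · rw [List.prod_singleton, hba]
    · have hβ' : sr a β ∈ posRoots Φ Δ := (sr_perm_pos hΦ hΔ ha hβ hba).1
      have hβ'Φ : sr a β ∈ Φ := hβ'.1
      have hfa : 0 < f a := by
        rw [f_simple hΦ hΔ hf ha]
        linarith [root_inner_pos hΦ (hΔ.1 ha)]
      have hk : 0 < 2 * ⟪a, β⟫ / ⟪a, a⟫ :=
        div_pos (by linarith) (root_inner_pos hΦ (hΔ.1 ha))
      have hlt : f (sr a β) < f β := by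
        rw [f_sr hΦ]
        nlinarith [hk, hfa]
      have hsub : {δ ∈ Φ | f δ < f (sr a β)} ⊂ {δ ∈ Φ | f δ < f β} := by
        constructor
        · intro δ ⟨h1, h2⟩
          exact ⟨h1, by linarith⟩
        · intro hcon
          have := hcon ⟨hβ'Φ, hlt⟩
          simp only [Set.mem_setOf_eq] at this
          linarith [this.2]
      have hfin : ({δ ∈ Φ | f δ < f β}).Finite := hΦ.finite.subset (fun δ h => h.1)
      have hlt' : ({δ ∈ Φ | f δ < f (sr a β)}).ncard < n := by
        rw [← hn]
        exact Set.ncard_lt_ncard hsub hfin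
      obtain ⟨L', hL', hLprod⟩ := IH _ hlt' (sr a β) hβ' rfl
      refine ⟨sr a :: (L' ++ [sr a]), ?_, ?_⟩
      · intro s hs
        rcases List.mem_cons.mp hs with h | h
        · rw [h]; exact mem_simpleReflections_iff.mpr ⟨a, ha, rfl⟩
        · rcases List.mem_append.mp h with h2 | h2
          · exact hL' s h2
          · rw [List.mem_singleton] at h2
            rw [h2]; exact mem_simpleReflections_iff.mpr ⟨a, ha, rfl⟩
      · rw [List.prod_cons, List.prod_append, List.prod_singleton, hLprod]
        have hconj : sr (sr a β) = sr a * sr β * (sr a)⁻¹ :=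
          sr_conj hΦ (sr_mem_weylGroup (hΔ.1 ha)) β
        have hgoal : sr a * (sr (sr a β) * sr a) = sr β := by
          rw [hconj, sr_inv]
          have h2 : sr a * (sr a * sr β * sr a * sr a) = sr β := by
            rw [mul_assoc (sr a * sr β), sr_mul_self, mul_one, ← mul_assoc, sr_mul_self, one_mul]
          exact h2
        exact hgoal

lemma refl_word (hΦ : IsIrredRootSystem Φ) (hΔ : IsBase Φ Δ)
    (hf : ∀ a ∈ Δ, f (coroot a) = 1) {β : V} (hβ : β ∈ Φ) :
    ∃ L : List (V ≃ₗ[ℝ] V), (∀ s ∈ L, s ∈ simpleReflections Δ) ∧ L.prod = sr β := by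
  rcases pos_or_neg hΦ hΔ hβ with h | h
  · exact refl_word_pos hΦ hΔ hf _ β h rfl
  · obtain ⟨L, h1, h2⟩ := refl_word_pos (f := f) hΦ hΔ hf _ (-β) h rfl
    exact ⟨L, h1, by rw [h2, sr_neg]⟩

lemma exists_word (hΦ : IsIrredRootSystem Φ) (hΔ : IsBase Φ Δ)
    (hf : ∀ a ∈ Δ, f (coroot a) = 1) {w : V ≃ₗ[ℝ] V} (hw : w ∈ weylGroup Φ) :
    ∃ L : List (V ≃ₗ[ℝ] V), (∀ s ∈ L, s ∈ simpleReflections Δ) ∧ L.prod = w := by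
  induction hw using Subgroup.closure_induction with
  | mem x hx =>
    obtain ⟨a, haΦ, rfl⟩ := mem_reflections_iff.mp hx
    exact refl_word hΦ hΔ hf haΦ
  | one => exact ⟨[], by simp, List.prod_nil⟩
  | mul x y hx hy ihx ihy =>
    obtain ⟨L1, h1, h1p⟩ := ihx
    obtain ⟨L2, h2, h2p⟩ := ihy
    refine ⟨L1 ++ L2, ?_, by rw [List.prod_append, h1p, h2p]⟩
    intro s hs
    rcases List.mem_append.mp hs with h | h
    exacts [h1 s h, h2 s h]
  | inv x hx ihx =>
    obtain ⟨L, h1, h1p⟩ := ihx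
    refine ⟨(L.map fun s => s⁻¹).reverse, ?_, ?_⟩
    · intro s hs
      rw [List.mem_reverse, List.mem_map] at hs
      obtain ⟨s', hs', rfl⟩ := hs
      obtain ⟨a, ha, rfl⟩ := mem_simpleReflections_iff.mp (h1 s' hs')
      rw [sr_inv]
      exact mem_simpleReflections_iff.mpr ⟨a, ha, rfl⟩
    · rw [← List.prod_inv_reverse, h1p]

lemma word_mem_weyl (hΔ : IsBase Φ Δ) {L : List (V ≃ₗ[ℝ] V)}
    (hL : ∀ s ∈ L, s ∈ simpleReflections Δ) : L.prod ∈ weylGroup Φ := by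
  induction L with
  | nil => exact (weylGroup Φ).one_mem
  | cons s L ih =>
    rw [List.prod_cons]
    exact (weylGroup Φ).mul_mem (simple_mem_weylGroup hΔ.1 (hL s List.mem_cons_self))
      (ih (fun x hx => hL x (List.mem_cons_of_mem s hx)))

end Stmt11

namespace Stmt11
open scoped Classical

variable {V : Type*} [NormedAddCommGroup V] [InnerProductSpace ℝ V]
variable {Φ : Set V} {Δ : Finset V} {t : V} {r : ℝ} {f : V →ₗ[ℝ] ℝ}

/-- The inversion set of `w`. -/
def InvSet (Φ : Set V) (Δ : Finset V) (w : V ≃ₗ[ℝ] V) : Set V :=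
  {γ | γ ∈ posRoots Φ Δ ∧ -(w γ) ∈ posRoots Φ Δ}

/-- The number of inversions of `w`. -/
noncomputable def NInv (Φ : Set V) (Δ : Finset V) (w : V ≃ₗ[ℝ] V) : ℕ :=
  (InvSet Φ Δ w).ncard

lemma InvSet_finite (hΦ : IsIrredRootSystem Φ) (w : V ≃ₗ[ℝ] V) : (InvSet Φ Δ w).Finite :=
  hΦ.finite.subset (fun γ h => h.1.1)

lemma InvSet_one (hΦ : IsIrredRootSystem Φ) (hΔ : IsBase Φ Δ) :
    InvSet Φ Δ (1 : V ≃ₗ[ℝ] V) = ∅ := by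
  ext γ
  simp only [InvSet, Set.mem_setOf_eq, Set.mem_empty_iff_false, iff_false]
  rintro ⟨h1, h2⟩
  exact not_pos_and_neg hΦ hΔ h1 h2

lemma NInv_one (hΦ : IsIrredRootSystem Φ) (hΔ : IsBase Φ Δ) :
    NInv Φ Δ (1 : V ≃ₗ[ℝ] V) = 0 := by
  rw [NInv, InvSet_one hΦ hΔ, Set.ncard_empty]

lemma mul_apply' (u w : V ≃ₗ[ℝ] V) (v : V) : (u * w) v = u (w v) := rfl

lemma InvSet_sr_mul_subset (hΦ : IsIrredRootSystem Φ) (hΔ : IsBase Φ Δ) {a : V} (ha : a ∈ Δ)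
    {w : V ≃ₗ[ℝ] V} (hw : w ∈ weylGroup Φ) :
    InvSet Φ Δ (sr a * w) ⊆ InvSet Φ Δ w ∪ {w.symm a} := by
  rintro γ ⟨hγp, hγn⟩
  rw [mul_apply'] at hγn
  have hwγ : w γ ∈ Φ := weyl_maps_root hΦ hw hγp.1
  rcases pos_or_neg hΦ hΔ hwγ with hp | hn
  · by_cases hwa : w γ = a
    · right
      rw [Set.mem_singleton_iff, ← hwa, LinearEquiv.symm_apply_apply]
    · exfalso
      exact not_pos_and_neg hΦ hΔ (sr_perm_pos hΦ hΔ ha hp hwa).1 hγn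
  · exact Or.inl ⟨hγp, hn⟩

lemma InvSet_sr_mul_eq (hΦ : IsIrredRootSystem Φ) (hΔ : IsBase Φ Δ) {a : V} (ha : a ∈ Δ)
    {w : V ≃ₗ[ℝ] V} (hw : w ∈ weylGroup Φ) (hwa : w.symm a ∈ posRoots Φ Δ) :
    InvSet Φ Δ (sr a * w) = insert (w.symm a) (InvSet Φ Δ w) ∧ w.symm a ∉ InvSet Φ Δ w := by
  have hnotmem : w.symm a ∉ InvSet Φ Δ w := by
    rintro ⟨h1, h2⟩
    rw [LinearEquiv.apply_symm_apply] at h2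
    exact not_pos_and_neg hΦ hΔ (simple_mem_pos hΔ ha) h2
  constructor
  · apply Set.Subset.antisymm
    · intro γ hγ
      rcases InvSet_sr_mul_subset hΦ hΔ ha hw hγ with h | h
      · exact Set.mem_insert_of_mem _ h
      · rw [Set.mem_singleton_iff] at h
        exact h ▸ Set.mem_insert _ _
    · intro γ hγ
      rcases Set.mem_insert_iff.mp hγ with h | h
      · subst h
        refine ⟨hwa, ?_⟩
        rw [mul_apply', LinearEquiv.apply_symm_apply, sr_apply_self, neg_neg]
        exact simple_mem_pos hΔ ha
      · obtain ⟨h1, h2⟩ := h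
        refine ⟨h1, ?_⟩
        rw [mul_apply']
        have hne : w γ ≠ -a := by
          intro hcon
          have : γ = w.symm (-a) := by
            rw [← hcon, LinearEquiv.symm_apply_apply]
          have hγeq : -γ = w.symm a := by
            rw [this, ← map_neg, neg_neg]
          exact not_pos_and_neg hΦ hΔ h1 (hγeq ▸ hwa)
        exact sr_perm_neg hΦ hΔ ha h2 hne
  · exact hnotmem

lemma NInv_sr_mul (hΦ : IsIrredRootSystem Φ) (hΔ : IsBase Φ Δ) {a : V} (ha : a ∈ Δ)
    {w : V ≃ₗ[ℝ] V} (hw : w ∈ weylGroup Φ) (hwa : w.symm a ∈ posRoots Φ Δ) :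
    NInv Φ Δ (sr a * w) = NInv Φ Δ w + 1 := by
  obtain ⟨heq, hnm⟩ := InvSet_sr_mul_eq hΦ hΔ ha hw hwa
  rw [NInv, heq, Set.ncard_insert_of_notMem hnm (InvSet_finite hΦ w)]
  rfl

lemma NInv_le_word (hΦ : IsIrredRootSystem Φ) (hΔ : IsBase Φ Δ) :
    ∀ L : List (V ≃ₗ[ℝ] V), (∀ s ∈ L, s ∈ simpleReflections Δ) → NInv Φ Δ L.prod ≤ L.length := by
  intro L
  induction L with
  | nil => intro _; rw [List.prod_nil, NInv_one hΦ hΔ]; simp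
  | cons s L ih =>
    intro hL
    have hs := hL s List.mem_cons_self
    obtain ⟨a, ha, rfl⟩ := mem_simpleReflections_iff.mp hs
    have hLs : ∀ x ∈ L, x ∈ simpleReflections Δ := fun x hx => hL x (List.mem_cons_of_mem _ hx)
    have hLw : L.prod ∈ weylGroup Φ := word_mem_weyl hΔ hLs
    rw [List.prod_cons, List.length_cons]
    calc NInv Φ Δ (sr a * L.prod)
        ≤ (insert (L.prod.symm a) (InvSet Φ Δ L.prod)).ncard := by
          apply Set.ncard_le_ncard
          · intro γ hγ
            rcases InvSet_sr_mul_subset hΦ hΔ ha hLw hγ with h | h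
            · exact Set.mem_insert_of_mem _ h
            · rw [Set.mem_singleton_iff] at h
              exact h ▸ Set.mem_insert _ _
          · exact Set.Finite.insert _ (InvSet_finite hΦ _)
      _ ≤ NInv Φ Δ L.prod + 1 := Set.ncard_insert_le _ _
      _ ≤ L.length + 1 := by have := ih hLs; omega

lemma len_le_of_word {w : V ≃ₗ[ℝ] V} {L : List (V ≃ₗ[ℝ] V)}
    (hL : ∀ s ∈ L, s ∈ simpleReflections Δ) (hp : L.prod = w) : len Δ w ≤ L.length :=
  Nat.sInf_le ⟨L, hL, rfl, hp⟩

lemma len_exists_word (hΦ : IsIrredRootSystem Φ) (hΔ : IsBase Φ Δ)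
    (hf : ∀ a ∈ Δ, f (coroot a) = 1) {w : V ≃ₗ[ℝ] V} (hw : w ∈ weylGroup Φ) :
    ∃ L : List (V ≃ₗ[ℝ] V), (∀ s ∈ L, s ∈ simpleReflections Δ) ∧ L.length = len Δ w ∧
      L.prod = w := by
  have hne : {n | ∃ L : List (V ≃ₗ[ℝ] V),
      (∀ s ∈ L, s ∈ simpleReflections Δ) ∧ L.length = n ∧ L.prod = w}.Nonempty := by
    obtain ⟨L, h1, h2⟩ := exists_word (f := f) hΦ hΔ hf hw
    exact ⟨L.length, L, h1, rfl, h2⟩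
  exact Nat.sInf_mem hne

lemma NInv_le_len (hΦ : IsIrredRootSystem Φ) (hΔ : IsBase Φ Δ)
    (hf : ∀ a ∈ Δ, f (coroot a) = 1) {w : V ≃ₗ[ℝ] V} (hw : w ∈ weylGroup Φ) :
    NInv Φ Δ w ≤ len Δ w := by
  obtain ⟨L, h1, h2, h3⟩ := len_exists_word (f := f) hΦ hΔ hf hw
  rw [← h2, ← h3]
  exact NInv_le_word hΦ hΔ L h1

lemma len_one' : len Δ (1 : V ≃ₗ[ℝ] V) = 0 :=
  Nat.le_zero.mp (len_le_of_word (L := []) (by simp) List.prod_nil)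

/-- The key step: multiplying by `sr a` when `w⁻¹ a` is positive increases both `NInv` and
`len` by one, preserving their equality. -/
lemma len_step (hΦ : IsIrredRootSystem Φ) (hΔ : IsBase Φ Δ)
    (hf : ∀ a ∈ Δ, f (coroot a) = 1) {a : V} (ha : a ∈ Δ) {w : V ≃ₗ[ℝ] V}
    (hw : w ∈ weylGroup Φ) (hwa : w.symm a ∈ posRoots Φ Δ)
    (hNlen : NInv Φ Δ w = len Δ w) :
    NInv Φ Δ (sr a * w) = len Δ (sr a * w) ∧ len Δ (sr a * w) = len Δ w + 1 := by
  have hN1 : NInv Φ Δ (sr a * w) = NInv Φ Δ w + 1 := NInv_sr_mul hΦ hΔ ha hw hwa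
  have hle : len Δ (sr a * w) ≤ len Δ w + 1 := by
    obtain ⟨L, h1, h2, h3⟩ := len_exists_word (f := f) hΦ hΔ hf hw
    have : len Δ (sr a * w) ≤ (sr a :: L).length := by
      refine len_le_of_word ?_ ?_
      · intro s hs
        rcases List.mem_cons.mp hs with h | h
        · rw [h]; exact mem_simpleReflections_iff.mpr ⟨a, ha, rfl⟩
        · exact h1 s h
      · rw [List.prod_cons, h3]
    rw [List.length_cons, h2] at this
    exact this
  have hge : NInv Φ Δ (sr a * w) ≤ len Δ (sr a * w) :=
    NInv_le_len (f := f) hΦ hΔ hf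
      ((weylGroup Φ).mul_mem (sr_mem_weylGroup (hΔ.1 ha)) hw)
  omega

end Stmt11

namespace Stmt11
open scoped Classical

variable {V : Type*} [NormedAddCommGroup V] [InnerProductSpace ℝ V]
variable {Φ : Set V} {Δ : Finset V} {t : V} {r : ℝ} {f : V →ₗ[ℝ] ℝ}

/-- Deletion lemma: if a word sends the simple root `a` to a negative root, the word
times `sr a` has a shorter expression. -/
lemma deletion (hΦ : IsIrredRootSystem Φ) (hΔ : IsBase Φ Δ) :
    ∀ L : List (V ≃ₗ[ℝ] V), (∀ s ∈ L, s ∈ simpleReflections Δ) → ∀ a ∈ Δ,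
    -(L.prod a) ∈ posRoots Φ Δ →
    ∃ L' : List (V ≃ₗ[ℝ] V), (∀ s ∈ L', s ∈ simpleReflections Δ) ∧
      L'.length + 1 = L.length ∧ L'.prod = L.prod * sr a := by
  intro L
  induction L with
  | nil =>
    intro _ a ha hneg
    rw [List.prod_nil] at hneg
    exact absurd (not_pos_and_neg hΦ hΔ (simple_mem_pos hΔ ha) hneg) (fun h => h)
  | cons s L₂ ih =>
    intro hL a ha hneg
    obtain ⟨b, hb, rfl⟩ := mem_simpleReflections_iff.mp (hL s List.mem_cons_self)
    have hL₂ : ∀ x ∈ L₂, x ∈ simpleReflections Δ := fun x hx => hL x (List.mem_cons_of_mem _ hx)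
    have hu : L₂.prod ∈ weylGroup Φ := word_mem_weyl hΔ hL₂
    have hua : L₂.prod a ∈ Φ := weyl_maps_root hΦ hu (hΔ.1 ha)
    rw [List.prod_cons, mul_apply'] at hneg
    rcases pos_or_neg hΦ hΔ hua with hp | hn
    · -- L₂.prod a is positive, so it must equal b
      by_cases hab : L₂.prod a = b
      · refine ⟨L₂, hL₂, by rw [List.length_cons], ?_⟩
        have hconj : sr b = L₂.prod * sr a * (L₂.prod)⁻¹ := by
          rw [← hab]
          exact sr_conj hΦ hu a
        rw [List.prod_cons, hconj]
        rw [mul_assoc (L₂.prod * sr a), inv_mul_cancel, mul_one, mul_assoc, sr_mul_self, mul_one]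
      · exact absurd (not_pos_and_neg hΦ hΔ (sr_perm_pos hΦ hΔ hb hp hab).1 hneg) (fun h => h)
    · obtain ⟨L₂', h1, h2, h3⟩ := ih hL₂ a ha hn
      refine ⟨sr b :: L₂', ?_, by simp [List.length_cons]; omega, ?_⟩
      · intro x hx
        rcases List.mem_cons.mp hx with h | h
        · rw [h]; exact mem_simpleReflections_iff.mpr ⟨b, hb, rfl⟩
        · exact h1 x h
      · rw [List.prod_cons, h3, List.prod_cons, mul_assoc]

lemma exists_simple_neg (hΦ : IsIrredRootSystem Φ) (hΔ : IsBase Φ Δ)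
    (hf : ∀ a ∈ Δ, f (coroot a) = 1) {w : V ≃ₗ[ℝ] V} (hw : w ∈ weylGroup Φ) (hne : w ≠ 1) :
    ∃ a ∈ Δ, -(w a) ∈ posRoots Φ Δ := by
  obtain ⟨L, hL, hlen, hprod⟩ := len_exists_word (f := f) hΦ hΔ hf hw
  rcases List.eq_nil_or_concat L with hnil | ⟨L₁, c, hcon⟩
  · exfalso
    rw [hnil, List.prod_nil] at hprod
    exact hne hprod.symm
  · rw [List.concat_eq_append] at hcon
    subst hcon
    have hc : c ∈ simpleReflections Δ := hL c (by simp)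
    obtain ⟨b, hb, rfl⟩ := mem_simpleReflections_iff.mp hc
    have hL₁ : ∀ x ∈ L₁, x ∈ simpleReflections Δ := fun x hx => hL x (by simp [hx])
    have hu : L₁.prod ∈ weylGroup Φ := word_mem_weyl hΔ hL₁
    have hub : L₁.prod b ∈ Φ := weyl_maps_root hΦ hu (hΔ.1 hb)
    have hwb : w b = -(L₁.prod b) := by
      rw [← hprod, List.prod_append, List.prod_singleton, mul_apply', sr_apply_self, map_neg]
    rcases pos_or_neg hΦ hΔ hub with hp | hn
    · exact ⟨b, hb, by rw [hwb, neg_neg]; exact hp⟩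
    · exfalso
      obtain ⟨L', h1, h2, h3⟩ := deletion hΦ hΔ L₁ hL₁ b hb hn
      have hL'w : L'.prod = w := by
        rw [h3, ← hprod, List.prod_append, List.prod_singleton]
      have := len_le_of_word h1 hL'w
      rw [← hlen] at this
      rw [List.length_append, List.length_singleton] at this
      omega

/-- A simple root orthogonal to `t` satisfies the hypothesis in `minCosetReps`. -/
lemma simple_S_coords {a : V} (ha : a ∈ Δ) (h0 : ⟪t, a⟫ = 0) :
    ∃ c : V → ℕ, (∀ b ∈ Δ, ⟪t, b⟫ ≠ 0 → c b = 0) ∧ a = ∑ b ∈ Δ, (c b : ℝ) • b := by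
  refine ⟨fun v => if v = a then 1 else 0, fun b _ hbt => ?_, ?_⟩
  · by_cases hba : b = a
    · exact absurd (hba ▸ h0) hbt
    · show (if b = a then 1 else 0) = 0
      rw [if_neg hba]
  · have h1 : ∑ b ∈ Δ, ((if b = a then (1:ℕ) else 0 : ℕ) : ℝ) • b
        = ∑ b ∈ Δ, (if b = a then b else 0) := by
      refine Finset.sum_congr rfl (fun b _ => ?_)
      by_cases hb : b = a <;> simp [hb]
    rw [h1, Finset.sum_ite_eq' Δ a (fun b => b), if_pos ha]

/-- Uniqueness of the minimal coset representative with a given value on `t`. -/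
lemma reps_unique (hΦ : IsIrredRootSystem Φ) (hΔ : IsBase Φ Δ) (ht : IsHighestRoot Φ Δ t)
    (hf : ∀ a ∈ Δ, f (coroot a) = 1) {x x' : V ≃ₗ[ℝ] V}
    (hx : x ∈ minCosetReps Φ Δ t) (hx' : x' ∈ minCosetReps Φ Δ t)
    (heq : x t = x' t) : x = x' := by
  by_contra hne
  set u : V ≃ₗ[ℝ] V := x⁻¹ * x' with hu
  have huW : u ∈ weylGroup Φ := (weylGroup Φ).mul_mem ((weylGroup Φ).inv_mem hx.1) hx'.1
  have hune : u ≠ 1 := by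
    intro h
    apply hne
    have : x * u = x' := by rw [hu, ← mul_assoc, mul_inv_cancel, one_mul]
    rw [h, mul_one] at this
    exact this
  have hut : u t = t := by
    show (x⁻¹ * x') t = t
    rw [mul_apply']
    show x.symm (x' t) = t
    rw [← heq, LinearEquiv.symm_apply_apply]
  obtain ⟨a, ha, hna⟩ := exists_simple_neg (f := f) hΦ hΔ hf huW hune
  have hta : ⟪t, a⟫ = 0 := by
    have h1 : 0 ≤ ⟪t, a⟫ := t_dominant hΦ hΔ ht ha
    have h2 : ⟪u t, u a⟫ = ⟪t, a⟫ := weyl_inner hΦ huW t a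
    rw [hut] at h2
    have h3 : 0 ≤ ⟪t, -(u a)⟫ := pos_inner_t hΦ hΔ ht hna
    rw [inner_neg_right] at h3
    linarith
  -- x' a is positive
  have hx'a : x' a ∈ posRoots Φ Δ :=
    hx'.2 a (hΔ.1 ha) (simple_S_coords ha hta)
  -- x (-(u a)) is positive
  have hnua : -(u a) ∈ Φ := posRoots_subset hna
  have htnua : ⟪t, -(u a)⟫ = 0 := by
    have h2 : ⟪u t, u a⟫ = ⟪t, a⟫ := weyl_inner hΦ huW t a
    rw [hut] at h2
    rw [inner_neg_right, h2, hta, neg_zero]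
  have hxnua : x (-(u a)) ∈ posRoots Φ Δ :=
    hx.2 _ hnua (orth_support hΦ hΔ ht hna htnua)
  have hxua : x (u a) = x' a := by
    show x ((x⁻¹ * x') a) = x' a
    rw [mul_apply']
    show x (x.symm (x' a)) = x' a
    rw [LinearEquiv.apply_symm_apply]
  rw [map_neg, hxua] at hxnua
  exact not_pos_and_neg hΦ hΔ hx'a hxnua

end Stmt11

namespace Stmt11
open scoped Classical

variable {V : Type*} [NormedAddCommGroup V] [InnerProductSpace ℝ V]
variable {Φ : Set V} {Δ : Finset V} {t : V} {r : ℝ} {f : V →ₗ[ℝ] ℝ}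

lemma f_coroot_long (hβr : ⟪(β : V), β⟫ = r) : f (coroot β) = (2/r) * f β := by
  unfold coroot
  rw [hβr, map_smul, smul_eq_mul]

lemma one_mem_reps (hΔ : IsBase Φ Δ) : (1 : V ≃ₗ[ℝ] V) ∈ minCosetReps Φ Δ t := by
  refine ⟨(weylGroup Φ).one_mem, fun γ hγ hS => ?_⟩
  obtain ⟨c, _, hsum⟩ := hS
  exact ⟨hγ, c, hsum⟩

/-- The inductive construction of the minimal coset representative sending `t` to a
given long root `β`, together with the computation of its length. -/
lemma construct (hΦ : IsIrredRootSystem Φ) (hΔ : IsBase Φ Δ)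
    (hr : IsGreatest {x : ℝ | ∃ α ∈ Φ, x = ⟪α, α⟫} r) (ht : IsHighestRoot Φ Δ t)
    (hf : ∀ a ∈ Δ, f (coroot a) = 1) :
    ∀ n : ℕ, ∀ β : V, β ∈ Φ → ⟪β, β⟫ = r → ({γ ∈ Φ | f β < f γ}).ncard = n →
    ∃ x ∈ minCosetReps Φ Δ t, x t = β ∧ NInv Φ Δ x = len Δ x ∧
      (len Δ x : ℝ) = f (coroot t) - f (coroot β) -
        (if β ∈ posRoots Φ Δ then (0:ℝ) else 1) := by
  intro n
  induction n using Nat.strong_induction_on with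
  | _ n IH =>
    intro β hβΦ hβr hn
    by_cases hβt : β = t
    · subst hβt
      refine ⟨1, one_mem_reps hΔ, rfl, ?_, ?_⟩
      · rw [NInv_one hΦ hΔ, len_one']
      · rw [len_one', if_pos (t_pos hΦ hΔ ht)]
        simp
    · obtain ⟨a, ha, haneg⟩ := exists_descent hΦ hΔ hr ht hβΦ hβr hβt
      have haΦ := hΔ.1 ha
      have haa := root_inner_pos hΦ haΦ
      have hrpos := r_pos hΦ hr
      set β' : V := sr a β with hβ'
      have hβ'Φ : β' ∈ Φ := by
        rw [hβ', sr_apply]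
        exact hΦ.reflect_mem a haΦ β hβΦ
      have hβ'r : ⟪β', β'⟫ = r := by rw [hβ', sr_inner]; exact hβr
      have hfa : f a = ⟪a, a⟫ / 2 := f_simple hΦ hΔ hf ha
      have hfβ' : f β' = f β - ⟪a, β⟫ := by
        rw [hβ', f_sr hΦ, hfa]
        field_simp
      have hflt : f β < f β' := by rw [hfβ']; linarith
      -- the measure decreases
      have hsub : {γ ∈ Φ | f β' < f γ} ⊂ {γ ∈ Φ | f β < f γ} := by
        constructor
        · intro δ ⟨h1, h2⟩
          exact ⟨h1, by linarith⟩
        · intro hcon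
          have := hcon ⟨hβ'Φ, hflt⟩
          simp only [Set.mem_setOf_eq] at this
          linarith [this.2]
      have hfin : ({γ ∈ Φ | f β < f γ}).Finite := hΦ.finite.subset (fun δ h => h.1)
      have hm : ({γ ∈ Φ | f β' < f γ}).ncard < n := by
        rw [← hn]; exact Set.ncard_lt_ncard hsub hfin
      obtain ⟨x', hx'reps, hx't, hN', hval'⟩ := IH _ hm β' hβ'Φ hβ'r rfl
      have hx'W := hx'reps.1
      -- inner product of a with β'
      have haβ' : ⟪a, β'⟫ = -⟪a, β⟫ := by
        have h1 : ⟪sr a a, sr a β⟫ = ⟪a, β⟫ := sr_inner a a β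
        rw [sr_apply_self, inner_neg_left] at h1
        rw [hβ']
        linarith
      have haβ'pos : 0 < ⟪a, β'⟫ := by rw [haβ']; linarith
      -- x = sr a * x'
      set x : V ≃ₗ[ℝ] V := sr a * x' with hx
      have hxW : x ∈ weylGroup Φ := (weylGroup Φ).mul_mem (sr_mem_weylGroup haΦ) hx'W
      have hxt : x t = β := by
        rw [hx, mul_apply', hx't, hβ', sr_sr]
      -- x is a minimal coset representative
      have hxreps : x ∈ minCosetReps Φ Δ t := by
        refine ⟨hxW, fun γ hγ hS => ?_⟩
        have hx'γ : x' γ ∈ posRoots Φ Δ := hx'reps.2 γ hγ hS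
        have horth : ⟪t, γ⟫ = 0 := S_orth hΦ hS
        have hne : x' γ ≠ a := by
          intro hcon
          have h1 : ⟪x' t, x' γ⟫ = ⟪t, γ⟫ := weyl_inner hΦ hx'W t γ
          rw [hx't, hcon, horth] at h1
          rw [← real_inner_comm β' a] at h1
          linarith
        rw [hx, mul_apply']
        exact (sr_perm_pos hΦ hΔ ha hx'γ hne).1
      -- x'.symm a is a positive root
      have hγ₀Φ : x'.symm a ∈ Φ := weyl_symm_maps_root hΦ hx'W haΦ
      have htγ₀ : ⟪t, x'.symm a⟫ = ⟪β', a⟫ := by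
        have h1 : ⟪x' t, x' (x'.symm a)⟫ = ⟪t, x'.symm a⟫ := weyl_inner hΦ hx'W t _
        rw [hx't, LinearEquiv.apply_symm_apply] at h1
        exact h1.symm
      have hγ₀pos : x'.symm a ∈ posRoots Φ Δ := by
        rcases pos_or_neg hΦ hΔ hγ₀Φ with hp | hn2
        · exact hp
        · exfalso
          have h3 := pos_inner_t hΦ hΔ ht hn2
          rw [inner_neg_right, htγ₀, real_inner_comm a β'] at h3
          linarith
      obtain ⟨hNx, hlenx⟩ := len_step (f := f) hΦ hΔ hf ha hx'W hγ₀pos hN'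
      refine ⟨x, hxreps, hxt, hNx, ?_⟩
      rw [hlenx]
      push_cast
      rw [hval']
      -- now the arithmetic of coroot heights, by cases on the position of β
      have hcβ : f (coroot β) = (2/r) * f β := f_coroot_long hβr
      have hcβ' : f (coroot β') = (2/r) * f β' := f_coroot_long hβ'r
      by_cases hba : β = -a
      · -- crossing case: β = -a, β' = a
        have hβ'a : β' = a := by rw [hβ', hba, map_neg, sr_apply_self, neg_neg]
        have hfca : f (coroot a) = 1 := hf a ha
        have hfcβ : f (coroot β) = -1 := by
          rw [hba]
          have : coroot (-a) = -coroot a := by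
            unfold coroot
            rw [inner_neg_neg, smul_neg]
          rw [this, map_neg, hfca]
        have hiβ : (if β ∈ posRoots Φ Δ then (0:ℝ) else 1) = 1 := by
          rw [if_neg]
          intro hcon
          have : -β ∈ posRoots Φ Δ := by
            rw [hba, neg_neg]; exact simple_mem_pos hΔ ha
          exact not_pos_and_neg hΦ hΔ hcon this
        have hiβ' : (if β' ∈ posRoots Φ Δ then (0:ℝ) else 1) = 0 := by
          rw [if_pos]
          rw [hβ'a]; exact simple_mem_pos hΔ ha
        rw [hiβ, hiβ', hfcβ, hβ'a, hfca]
        ring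
      · -- generic case
        have hbne : β ≠ a := by
          intro hcon
          rw [hcon] at haneg
          linarith
        have hm1 : 2 * ⟪a, β⟫ / ⟪β, β⟫ = -1 :=
          cartan_eq_neg_one hΦ hr hβΦ haΦ hβr hbne hba haneg
        have hab : ⟪a, β⟫ = -r/2 := by
          rw [hβr] at hm1
          field_simp at hm1
          linarith
        have hdiff : f (coroot β') = f (coroot β) + 1 := by
          rw [hcβ, hcβ', hfβ', hab]
          field_simp
          ring
        have hsame : (if β' ∈ posRoots Φ Δ then (0:ℝ) else 1)
            = (if β ∈ posRoots Φ Δ then (0:ℝ) else 1) := by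
          rcases pos_or_neg hΦ hΔ hβΦ with hp | hn3
          · have hp' : β' ∈ posRoots Φ Δ := by
              rw [hβ']
              exact (sr_perm_pos hΦ hΔ ha hp hbne).1
            rw [if_pos hp, if_pos hp']
          · have hβnp : β ∉ posRoots Φ Δ := fun h => not_pos_and_neg hΦ hΔ h hn3
            have hnegβ'pos : -β' ∈ posRoots Φ Δ := by
              rw [hβ']
              exact sr_perm_neg hΦ hΔ ha hn3 hba
            have hβ'np : β' ∉ posRoots Φ Δ := fun h => not_pos_and_neg hΦ hΔ h hnegβ'pos
            rw [if_neg hβnp, if_neg hβ'np]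
        rw [hsame, hdiff]
        ring

end Stmt11

/-- For a positive long root `α`, the minimal coset representative
`x_α` (sending the highest root `α̃` to `α`) has length `ht^∨(α̃) − ht^∨(α)`, and
`x_{−α}` has length `ht^∨(α̃) + ht^∨(α) − 1`; here `ht^∨ = f ∘ coroot` where `f` is the
linear functional taking the value `1` on each simple coroot. -/
theorem len_minCosetRep (Φ : Set V) (hΦ : IsIrredRootSystem Φ)
    (Δ : Finset V) (hΔ : IsBase Φ Δ)
    (r : ℝ) (hr : IsGreatest {x : ℝ | ∃ α ∈ Φ, x = ⟪α, α⟫} r)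
    (t : V) (ht : IsHighestRoot Φ Δ t)
    (f : V →ₗ[ℝ] ℝ) (hf : ∀ a ∈ Δ, f (coroot a) = 1)
    (α : V) (hα : α ∈ posRoots Φ Δ) (hαlg : ⟪α, α⟫ = r)
    (xα : V ≃ₗ[ℝ] V) (hxα : xα ∈ minCosetReps Φ Δ t) (hxαt : xα t = α)
    (xnα : V ≃ₗ[ℝ] V) (hxnα : xnα ∈ minCosetReps Φ Δ t) (hxnαt : xnα t = -α) :
    (len Δ xα : ℝ) = f (coroot t) - f (coroot α) ∧
      (len Δ xnα : ℝ) = f (coroot t) + f (coroot α) - 1 := by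
  have hαΦ : α ∈ Φ := Stmt11.posRoots_subset hα
  constructor
  · obtain ⟨y, hyreps, hyt, _, hyval⟩ :=
      Stmt11.construct hΦ hΔ hr ht hf _ α hαΦ hαlg rfl
    have hxy : xα = y := Stmt11.reps_unique hΦ hΔ ht hf hxα hyreps (hxαt.trans hyt.symm)
    rw [hxy, hyval, if_pos hα, sub_zero]
  · have hnαΦ : -α ∈ Φ := Stmt11.neg_mem_phi hΦ hαΦ
    have hnαr : ⟪(-α : V), -α⟫ = r := by rw [inner_neg_neg]; exact hαlg
    obtain ⟨y, hyreps, hyt, _, hyval⟩ :=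
      Stmt11.construct hΦ hΔ hr ht hf _ (-α) hnαΦ hnαr rfl
    have hxy : xnα = y := Stmt11.reps_unique hΦ hΔ ht hf hxnα hyreps (hxnαt.trans hyt.symm)
    have hnp : -α ∉ posRoots Φ Δ := by
      intro h
      exact Stmt11.not_pos_and_neg hΦ hΔ h (by rwa [neg_neg])
    have hcor : coroot (-α : V) = -coroot α := by
      unfold coroot
      rw [inner_neg_neg, smul_neg]
    rw [hxy, hyval, if_neg hnp, hcor, map_neg]
    ring
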